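/- Let (G/H, g) be a Riemannian geodesic orbit space, i.e., for each X in m there exists Z in h with ⟨[X+Z, Y]_m, X⟩ = 0 for all Y in m. Then for every Y in the centralizer C_m(h) of h in m, the endomorphism ad(Y) leaves m invariant and its restriction to m is skew-symmetric with respect to the inner product ⟨·,·⟩. -/
import Mathlib


/-- Lemma on G.O. spaces: In a reductive decomposition `g = h ⊕ m` (with `m` the
Killing-orthogonal complement of the isotropy algebra `h` and `P` the projection onto `m`),
and with the geodesic orbit criterion (Kowalski–Vanhecke) satisfied for the inner product `B`
on `m`, every `Y` in the centralizer `C_m(h)` satisfies `⁅Y, m⁆ ⊆ m` and `ad Y` restricted to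
`m` is skew-symmetric with respect to `B`. -/
theorem go_space_centralizer_acts_skew
    {L : Type*} [LieRing L] [LieAlgebra ℝ L] [Module.Finite ℝ L]
    (H : LieSubalgebra ℝ L)
    (hneg : ∀ A ∈ H, A ≠ 0 → killingForm ℝ L A A < 0)
    (m : Set L) (hm : m = {X : L | ∀ A ∈ H, killingForm ℝ L X A = 0})
    (hinv : ∀ A ∈ H, ∀ X ∈ m, ⁅A, X⁆ ∈ m)
    (B : L →ₗ[ℝ] L →ₗ[ℝ] ℝ)
    (hBsymm : ∀ X ∈ m, ∀ Y ∈ m, B X Y = B Y X)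
    (hBpos : ∀ X ∈ m, X ≠ 0 → 0 < B X X)
    (P : L →ₗ[ℝ] L)
    (hPm : ∀ X : L, P X ∈ m) (hPid : ∀ X ∈ m, P X = X)
    (hPh : ∀ X : L, X - P X ∈ (H : Set L))
    -- the geodesic orbit criterion of Kowalski–Vanhecke
    (hGO : ∀ X ∈ m, ∃ Z ∈ H, ∀ Y ∈ m, B (P ⁅X + Z, Y⁆) X = 0) :
    ∀ Y ∈ m, (∀ A ∈ H, ⁅Y, A⁆ = 0) →
      (∀ X ∈ m, ⁅Y, X⁆ ∈ m) ∧
      (∀ X ∈ m, ∀ X' ∈ m, B ⁅Y, X⁆ X' = - B X ⁅Y, X'⁆) := by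
  intro Y hY hYc
  -- `m` is closed under addition
  have hadd : ∀ X ∈ m, ∀ X' ∈ m, X + X' ∈ m := by
    intro X hX X' hX'
    rw [hm] at hX hX' ⊢
    intro A hA
    simp [map_add, hX A hA, hX' A hA]
  -- `⁅Y, m⁆ ⊆ m`
  have hmem : ∀ X ∈ m, ⁅Y, X⁆ ∈ m := by
    intro X hX
    rw [hm]
    intro A hA
    have h1 : killingForm ℝ L ⁅Y, X⁆ A = - killingForm ℝ L X ⁅Y, A⁆ :=
      LieModule.traceForm_apply_lie_apply' ℝ L L Y X A
    rw [h1, hYc A hA]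
    simp
  refine ⟨hmem, ?_⟩
  -- quadratic vanishing : B ⁅Y, X⁆ X = 0
  have key : ∀ X ∈ m, B ⁅Y, X⁆ X = 0 := by
    intro X hX
    obtain ⟨Z, hZ, hOrth⟩ := hGO X hX
    have hZY : ⁅Z, Y⁆ = 0 := by
      rw [← lie_skew, hYc Z hZ, neg_zero]
    have hXY : ⁅X, Y⁆ ∈ m := by
      have := hmem X hX
      rw [hm] at this ⊢
      intro A hA
      rw [show ⁅X, Y⁆ = -⁅Y, X⁆ from (lie_skew X Y).symm, map_neg, LinearMap.neg_apply,
        this A hA, neg_zero]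
    have h0 := hOrth Y hY
    rw [add_lie, hZY, add_zero, hPid _ hXY] at h0
    have : B ⁅X, Y⁆ X = - B ⁅Y, X⁆ X := by
      rw [show ⁅X, Y⁆ = -⁅Y, X⁆ from (lie_skew X Y).symm, map_neg, LinearMap.neg_apply]
    rw [this] at h0
    linarith
  intro X hX X' hX'
  have h2 := key (X + X') (hadd X hX X' hX')
  rw [lie_add] at h2
  simp only [map_add, LinearMap.add_apply] at h2
  rw [key X hX, key X' hX'] at h2
  have hsym : B X ⁅Y, X'⁆ = B ⁅Y, X'⁆ X := hBsymm X hX _ (hmem X' hX')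
  rw [hsym]
  linarith
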